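/- Let h : [0,∞) → ℝ be a nonnegative C² function satisfying h''(t) + c₁h'(t) ≤ c₂h(t) + c₃ with h(0) = h₀, h'(0) = h₀', where c₁, c₂ > 0 and c₃ ∈ ℝ. Set β = (-c₁ + √(c₁² + 4c₂))/2. Then for all t ≥ 0, h(t) ≤ (h₀ + c₃/(β(β+c₁)) + (h₀' - βh₀ - c₃/(β+c₁))/(c₁+2β))·e^{βt} - ((h₀' - βh₀ - c₃/(β+c₁))/(c₁+2β))·e^{-(c₁+β)t} - c₃/(β(c₁+β)). -/

import Mathlib

open Real Set

lemma aux_le_of_derivWithin_nonpos {f f' : ℝ → ℝ}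
    (hf : ∀ t ∈ Ici (0:ℝ), HasDerivWithinAt f (f' t) (Ici 0) t)
    (hf' : ∀ t ∈ Ici (0:ℝ), f' t ≤ 0) :
    ∀ t ∈ Ici (0:ℝ), f t ≤ f 0 := by
  have hc : ContinuousOn f (Ici 0) := fun t ht => (hf t ht).continuousWithinAt
  have hanti : AntitoneOn f (Ici 0) := by
    apply antitoneOn_of_deriv_nonpos (convex_Ici 0) hc
    · intro x hx
      rw [interior_Ici] at hx
      exact ((hf x (mem_Ici.mpr (le_of_lt (show (0:ℝ) < x from hx)))).hasDerivAt
        (Ici_mem_nhds hx)).differentiableAt.differentiableWithinAt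
    · intro x hx
      rw [interior_Ici] at hx
      rw [((hf x (mem_Ici.mpr (le_of_lt (show (0:ℝ) < x from hx)))).hasDerivAt (Ici_mem_nhds hx)).deriv]
      exact hf' x (mem_Ici.mpr (le_of_lt (show (0:ℝ) < x from hx)))
  exact fun t ht => hanti self_mem_Ici ht ht

/-- Second-order differential inequality comparison (Lemma 2.2). -/
theorem stmt0 (c₁ c₂ c₃ h₀ h₀' β : ℝ) (hc₁ : 0 < c₁) (hc₂ : 0 < c₂)
    (hβ : β = (-c₁ + Real.sqrt (c₁ ^ 2 + 4 * c₂)) / 2)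
    (h : ℝ → ℝ) (hC2 : ContDiffOn ℝ 2 h (Ici 0))
    (hnn : ∀ t ∈ Ici (0 : ℝ), 0 ≤ h t)
    (hineq : ∀ t ∈ Ici (0 : ℝ),
      derivWithin (derivWithin h (Ici 0)) (Ici 0) t + c₁ * derivWithin h (Ici 0) t
        ≤ c₂ * h t + c₃)
    (hh0 : h 0 = h₀) (hh0' : derivWithin h (Ici 0) 0 = h₀') :
    ∀ t ∈ Ici (0 : ℝ),
      h t ≤ (h₀ + c₃ / (β * (β + c₁)) + (h₀' - β * h₀ - c₃ / (β + c₁)) / (c₁ + 2 * β))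
              * Real.exp (β * t)
            - ((h₀' - β * h₀ - c₃ / (β + c₁)) / (c₁ + 2 * β)) * Real.exp (-(c₁ + β) * t)
            - c₃ / (β * (c₁ + β)) := by
  -- facts about β
  have hsqnn : (0:ℝ) ≤ c₁ ^ 2 + 4 * c₂ := by nlinarith
  have hs2 : Real.sqrt (c₁ ^ 2 + 4 * c₂) ^ 2 = c₁ ^ 2 + 4 * c₂ := Real.sq_sqrt hsqnn
  have hsnn : 0 ≤ Real.sqrt (c₁ ^ 2 + 4 * c₂) := Real.sqrt_nonneg _
  have hβpos : 0 < β := by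
    rw [hβ]
    have : c₁ < Real.sqrt (c₁ ^ 2 + 4 * c₂) := by nlinarith
    linarith
  have hβc₂ : β * (β + c₁) = c₂ := by rw [hβ]; nlinarith
  have hcβ : 0 < c₁ + β := by linarith
  have hc2β : 0 < c₁ + 2 * β := by linarith
  -- derivatives
  set D1 := derivWithin h (Ici (0:ℝ)) with hD1
  set D2 := derivWithin D1 (Ici (0:ℝ)) with hD2
  have hu : UniqueDiffOn ℝ (Ici (0:ℝ)) := uniqueDiffOn_Ici 0
  have hdh : ∀ t ∈ Ici (0:ℝ), HasDerivWithinAt h (D1 t) (Ici 0) t := by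
    intro t ht
    exact (hC2.differentiableOn (by norm_num) t ht).hasDerivWithinAt
  have hC1 : ContDiffOn ℝ 1 D1 (Ici 0) := hC2.derivWithin hu (by norm_num)
  have hdD1 : ∀ t ∈ Ici (0:ℝ), HasDerivWithinAt D1 (D2 t) (Ici 0) t := by
    intro t ht
    exact (hC1.differentiableOn (by norm_num) t ht).hasDerivWithinAt
  -- first comparison: g = D1 - β h
  set A : ℝ := h₀' - β * h₀ - c₃ / (c₁ + β) with hA
  set B : ℝ := c₃ / (c₁ + β) with hB
  -- F t = exp ((c₁+β) t) * (D1 t - β h t - B)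
  have hF : ∀ t ∈ Ici (0:ℝ),
      HasDerivWithinAt (fun t => Real.exp ((c₁ + β) * t) * (D1 t - β * h t - B))
        ((c₁ + β) * Real.exp ((c₁ + β) * t) * (D1 t - β * h t - B)
          + Real.exp ((c₁ + β) * t) * (D2 t - β * D1 t)) (Ici 0) t := by
    intro t ht
    have he : HasDerivWithinAt (fun t => Real.exp ((c₁ + β) * t))
        ((c₁ + β) * Real.exp ((c₁ + β) * t)) (Ici 0) t := by
      have := ((hasDerivAt_id t).const_mul (c₁ + β)).exp.hasDerivWithinAt (s := Ici 0)
      simpa [mul_comm] using this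
    have hg : HasDerivWithinAt (fun t => D1 t - β * h t - B) (D2 t - β * D1 t) (Ici 0) t :=
      (((hdD1 t ht).sub ((hdh t ht).const_mul β))).sub_const B
    exact he.mul hg
  have hF' : ∀ t ∈ Ici (0:ℝ),
      (c₁ + β) * Real.exp ((c₁ + β) * t) * (D1 t - β * h t - B)
        + Real.exp ((c₁ + β) * t) * (D2 t - β * D1 t) ≤ 0 := by
    intro t ht
    have h1 := hineq t ht
    have hexp : 0 < Real.exp ((c₁ + β) * t) := Real.exp_pos _
    have key : (c₁ + β) * (D1 t - β * h t - B) + (D2 t - β * D1 t) ≤ 0 := by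
      have hBc : (c₁ + β) * B = c₃ := by rw [hB]; field_simp [hcβ.ne']
      have hm : β * (β + c₁) * h t = c₂ * h t := by rw [hβc₂]
      nlinarith [hm, hBc, h1]
    nlinarith
  have hcomp1 := aux_le_of_derivWithin_nonpos hF hF'
  -- so for t ≥ 0 : D1 t - β h t ≤ A * exp(-(c₁+β) t) + B
  have hg_bound : ∀ t ∈ Ici (0:ℝ),
      D1 t - β * h t ≤ A * Real.exp (-(c₁ + β) * t) + B := by
    intro t ht
    have := hcomp1 t ht
    have h0 : Real.exp ((c₁ + β) * 0) * (D1 0 - β * h 0 - B) = A := by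
      simp [hh0, hh0', hA]
    rw [h0] at this
    have hexp : 0 < Real.exp ((c₁ + β) * t) := Real.exp_pos _
    have hE : Real.exp (-(c₁ + β) * t) = (Real.exp ((c₁ + β) * t))⁻¹ := by
      rw [← Real.exp_neg]; ring_nf
    have h4 : D1 t - β * h t - B ≤ A / Real.exp ((c₁ + β) * t) :=
      (le_div_iff₀ hexp).mpr (by linarith [this])
    have h5 : A * Real.exp (-(c₁ + β) * t) = A / Real.exp ((c₁ + β) * t) := by
      rw [hE, div_eq_mul_inv]
    rw [h5]
    linarith [h4]
  -- second comparison
  -- G t = exp(-β t) * h t + A/(c₁+2β) * exp(-(c₁+2β) t) + B/β * exp(-β t)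
  have hG : ∀ t ∈ Ici (0:ℝ),
      HasDerivWithinAt (fun t => Real.exp (-β * t) * h t
          + A / (c₁ + 2 * β) * Real.exp (-(c₁ + 2 * β) * t)
          + B / β * Real.exp (-β * t))
        ((-β) * Real.exp (-β * t) * h t + Real.exp (-β * t) * D1 t
          + A / (c₁ + 2 * β) * (-(c₁ + 2 * β) * Real.exp (-(c₁ + 2 * β) * t))
          + B / β * (-β * Real.exp (-β * t))) (Ici 0) t := by
    intro t ht
    have he1 : HasDerivWithinAt (fun t => Real.exp (-β * t))
        ((-β) * Real.exp (-β * t)) (Ici 0) t := by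
      have := ((hasDerivAt_id t).const_mul (-β)).exp.hasDerivWithinAt (s := Ici 0)
      simpa [mul_comm] using this
    have he2 : HasDerivWithinAt (fun t => Real.exp (-(c₁ + 2 * β) * t))
        (-(c₁ + 2 * β) * Real.exp (-(c₁ + 2 * β) * t)) (Ici 0) t := by
      have := ((hasDerivAt_id t).const_mul (-(c₁ + 2 * β))).exp.hasDerivWithinAt (s := Ici 0)
      simpa [mul_comm] using this
    exact ((he1.mul (hdh t ht)).add (he2.const_mul (A / (c₁ + 2 * β)))).add
      (he1.const_mul (B / β))
  have hG' : ∀ t ∈ Ici (0:ℝ),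
      (-β) * Real.exp (-β * t) * h t + Real.exp (-β * t) * D1 t
          + A / (c₁ + 2 * β) * (-(c₁ + 2 * β) * Real.exp (-(c₁ + 2 * β) * t))
          + B / β * (-β * Real.exp (-β * t)) ≤ 0 := by
    intro t ht
    have hgb := hg_bound t ht
    have hexp : 0 < Real.exp (-β * t) := Real.exp_pos _
    have hsplit : Real.exp (-(c₁ + 2 * β) * t)
        = Real.exp (-β * t) * Real.exp (-(c₁ + β) * t) := by
      rw [← Real.exp_add]; ring_nf
    have hA1 : A / (c₁ + 2 * β) * (-(c₁ + 2 * β) * Real.exp (-(c₁ + 2 * β) * t))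
        = -A * Real.exp (-(c₁ + 2 * β) * t) := by
      field_simp
    have hB1 : B / β * (-β * Real.exp (-β * t)) = -B * Real.exp (-β * t) := by
      field_simp
    rw [hA1, hB1, hsplit]
    have := mul_le_mul_of_nonneg_left hgb (le_of_lt hexp)
    nlinarith [this]
  have hcomp2 := aux_le_of_derivWithin_nonpos hG hG'
  intro t ht
  have h2 := hcomp2 t ht
  have h0v : Real.exp (-β * 0) * h 0 + A / (c₁ + 2 * β) * Real.exp (-(c₁ + 2 * β) * 0)
      + B / β * Real.exp (-β * 0) = h₀ + A / (c₁ + 2 * β) + B / β := by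
    simp [hh0]
  rw [h0v] at h2
  -- multiply by exp(β t)
  have hexp : 0 < Real.exp (β * t) := Real.exp_pos _
  have hinv : Real.exp (-β * t) = (Real.exp (β * t))⁻¹ := by
    rw [← Real.exp_neg]; ring_nf
  have hsplit2 : Real.exp (-(c₁ + 2 * β) * t)
      = Real.exp (-β * t) * Real.exp (-(c₁ + β) * t) := by
    rw [← Real.exp_add]; ring_nf
  have hmain : h t ≤ (h₀ + A / (c₁ + 2 * β) + B / β) * Real.exp (β * t)
      - A / (c₁ + 2 * β) * Real.exp (-(c₁ + β) * t) - B / β := by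
    rw [hsplit2, hinv] at h2
    have h3 := mul_le_mul_of_nonneg_left h2 (le_of_lt hexp)
    have hne : Real.exp (β * t) ≠ 0 := ne_of_gt hexp
    calc h t = Real.exp (β * t) * ((Real.exp (β * t))⁻¹ * h t
        + A / (c₁ + 2 * β) * ((Real.exp (β * t))⁻¹ * Real.exp (-(c₁ + β) * t))
        + B / β * (Real.exp (β * t))⁻¹)
        - A / (c₁ + 2 * β) * Real.exp (-(c₁ + β) * t) - B / β := by
          field_simp; ring
      _ ≤ Real.exp (β * t) * (h₀ + A / (c₁ + 2 * β) + B / β)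
        - A / (c₁ + 2 * β) * Real.exp (-(c₁ + β) * t) - B / β := by
          linarith [mul_le_mul_of_nonneg_left h2 (le_of_lt hexp)]
      _ = (h₀ + A / (c₁ + 2 * β) + B / β) * Real.exp (β * t)
        - A / (c₁ + 2 * β) * Real.exp (-(c₁ + β) * t) - B / β := by ring
  have hBβ : B / β = c₃ / (β * (c₁ + β)) := by
    rw [hB, div_div, mul_comm]
  have eA : A = h₀' - β * h₀ - c₃ / (β + c₁) := by rw [hA, hB, add_comm c₁ β]
  have hBβ2 : B / β = c₃ / (β * (β + c₁)) := by rw [hBβ]; ring_nf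
  have e2 : A / (c₁ + 2 * β) = (h₀' - β * h₀ - c₃ / (β + c₁)) / (c₁ + 2 * β) := by rw [eA]
  rw [← e2, ← hBβ2, ← hBβ]
  linarith [hmain]
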